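/- arXiv:2107.04651 — 3 statements merged into one kernel-verified Lean document; each statement's English description precedes it below -/
import Mathlib

section
/- Let f : ℝ → ℝ be a nonnegative C¹ function on [t₀,∞) such that its derivative is bounded, |f'(t)| ≤ M for all t ≥ t₀, and such that the improper integral ∫_{t₀}^∞ f(s) ds converges. Then lim_{t→∞} f(t) = 0. -/
open Set Filter Topology

open MeasureTheory

/-- Barbalat-type lemma: a nonnegative `C¹` function on `[t₀, ∞)` with bounded derivative whose
improper integral converges tends to `0` at infinity. -/
theorem barbalat_nonneg_bounded_deriv
    (t₀ M : ℝ) (f f' : ℝ → ℝ)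
    (hnonneg : ∀ t, t₀ ≤ t → 0 ≤ f t)
    (hderiv : ∀ t, t₀ ≤ t → HasDerivAt f (f' t) t)
    (hf'cont : ContinuousOn f' (Ici t₀))
    (hbound : ∀ t, t₀ ≤ t → |f' t| ≤ M)
    (hint : MeasureTheory.IntegrableOn f (Ici t₀)) :
    Tendsto f atTop (𝓝 0) := by
  set M' : ℝ := max M 1 with hM'
  have hM'pos : (0:ℝ) < M' := lt_of_lt_of_le one_pos (le_max_right _ _)
  -- Lipschitz bound
  have hlip : ∀ x ∈ Ici t₀, ∀ y ∈ Ici t₀, |f y - f x| ≤ M' * |y - x| := by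
    intro x hx y hy
    have := (convex_Ici t₀).norm_image_sub_le_of_norm_hasDerivWithin_le
      (f := f) (f' := f') (C := M')
      (fun z hz => (hderiv z hz).hasDerivWithinAt)
      (fun z hz => le_trans (hbound z hz) (le_max_left _ _)) hx hy
    simpa [Real.norm_eq_abs] using this
  -- tail integral
  set tail : ℝ → ℝ := fun t => ∫ x in Ici t, f x with htail
  have htail_nonneg : ∀ t, t₀ ≤ t → 0 ≤ tail t := by
    intro t ht
    apply setIntegral_nonneg measurableSet_Ici
    intro x hx; exact hnonneg x (le_trans ht hx)
  -- key inequality : f t ^ 2 ≤ 2 * M' * tail t for t ≥ t₀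
  have hkey : ∀ t, t₀ ≤ t → f t ^ 2 ≤ 2 * M' * tail t := by
    intro t ht
    set c : ℝ := f t with hc
    have hc0 : 0 ≤ c := hnonneg t ht
    set L : ℝ := c / M' with hL
    have hL0 : 0 ≤ L := div_nonneg hc0 hM'pos.le
    have hIcc : Icc t (t + L) ⊆ Ici t₀ := fun x hx => le_trans ht hx.1
    have hfi : IntervalIntegrable f volume t (t + L) := by
      apply (hint.mono_set ?_).intervalIntegrable
      rw [uIcc_of_le (by linarith)]; exact hIcc
    have hgi : IntervalIntegrable (fun s => c - M' * (s - t)) volume t (t + L) :=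
      ((by continuity : Continuous fun s => c - M' * (s - t)).intervalIntegrable t (t + L))
    have hmono : ∫ s in t..(t + L), (c - M' * (s - t)) ≤ ∫ s in t..(t + L), f s := by
      apply intervalIntegral.integral_mono_on (by linarith) hgi hfi
      intro x hx
      have hx0 : t₀ ≤ x := le_trans ht hx.1
      have := hlip t ht x hx0
      have h1 : f t - f x ≤ M' * (x - t) := by
        have habs : |x - t| = x - t := abs_of_nonneg (by linarith [hx.1])
        calc f t - f x ≤ |f x - f t| := by rw [abs_sub_comm]; exact le_abs_self _ |>.trans_eq rfl
          _ ≤ M' * |x - t| := hlip t ht x hx0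
          _ = M' * (x - t) := by rw [habs]
      linarith
    have hval : ∫ s in t..(t + L), (c - M' * (s - t)) = c ^ 2 / (2 * M') := by
      have : ∫ s in t..(t + L), (c - M' * (s - t))
          = ∫ s in t..(t + L), ((c + M' * t) - M' * s) := by
        congr 1; ext s; ring
      rw [this]
      have h1 : IntervalIntegrable (fun _ : ℝ => c + M' * t) volume t (t + L) :=
        intervalIntegrable_const
      have h2 : IntervalIntegrable (fun s : ℝ => M' * s) volume t (t + L) :=
        ((continuous_const.mul continuous_id').intervalIntegrable t (t + L))
      rw [intervalIntegral.integral_sub h1 h2]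
      rw [intervalIntegral.integral_const, intervalIntegral.integral_const_mul,
        integral_id]
      have hM'ne : M' ≠ 0 := ne_of_gt hM'pos
      field_simp [hL]
      have hLM : M' * L = c := by rw [hL]; field_simp
      linear_combination (c - M' * L) * hLM
    have hle_tail : ∫ s in t..(t + L), f s ≤ tail t := by
      rw [intervalIntegral.integral_of_le (by linarith)]
      apply setIntegral_mono_set (hint.mono_set (Ici_subset_Ici.2 ht))
      · filter_upwards [ae_restrict_mem measurableSet_Ici] with x hx
        exact hnonneg x (le_trans ht hx)
      · exact Eventually.of_forall (fun x hx => le_of_lt hx.1)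
    have : c ^ 2 / (2 * M') ≤ tail t := by
      calc c ^ 2 / (2 * M') = ∫ s in t..(t + L), (c - M' * (s - t)) := hval.symm
        _ ≤ ∫ s in t..(t + L), f s := hmono
        _ ≤ tail t := hle_tail
    rw [div_le_iff₀ (by positivity)] at this
    linarith [this]
  -- tail tends to 0
  have htail0 : Tendsto tail atTop (𝓝 0) := by
    have hIoi : IntegrableOn f (Ioi t₀) := hint.mono_set Ioi_subset_Ici_self
    set I : ℝ := ∫ x in Ioi t₀, f x with hI
    have hIlim : Tendsto (fun b => ∫ x in t₀..b, f x) atTop (𝓝 I) :=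
      MeasureTheory.intervalIntegral_tendsto_integral_Ioi t₀ hIoi tendsto_id
    have heq : ∀ᶠ t in atTop, tail t = I - ∫ x in t₀..t, f x := by
      filter_upwards [eventually_ge_atTop t₀] with t ht
      have hsplit : I = (∫ x in Ioc t₀ t, f x) + ∫ x in Ioi t, f x := by
        rw [hI, ← Set.Ioc_union_Ioi_eq_Ioi ht,
          setIntegral_union (Set.Ioc_disjoint_Ioi le_rfl) measurableSet_Ioi
            (hIoi.mono_set Ioc_subset_Ioi_self)
            (hIoi.mono_set (Ioi_subset_Ioi ht))]
      have h1 : tail t = ∫ x in Ioi t, f x := integral_Ici_eq_integral_Ioi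
      have h2 : ∫ x in t₀..t, f x = ∫ x in Ioc t₀ t, f x :=
        intervalIntegral.integral_of_le ht
      rw [h1, h2]; linarith [hsplit]
    have : Tendsto (fun t => I - ∫ x in t₀..t, f x) atTop (𝓝 (I - I)) :=
      tendsto_const_nhds.sub hIlim
    rw [sub_self] at this
    exact this.congr' (heq.mono fun t h => h.symm)
  -- squeeze
  have hsq : Tendsto (fun t => Real.sqrt (2 * M' * tail t)) atTop (𝓝 0) := by
    have : Tendsto (fun t => 2 * M' * tail t) atTop (𝓝 (2 * M' * 0)) :=
      tendsto_const_nhds.mul htail0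
    rw [mul_zero] at this
    simpa [Real.sqrt_zero] using this.sqrt
  apply tendsto_of_tendsto_of_tendsto_of_le_of_le' tendsto_const_nhds hsq
  · filter_upwards [eventually_ge_atTop t₀] with t ht using hnonneg t ht
  · filter_upwards [eventually_ge_atTop t₀] with t ht
    exact (Real.le_sqrt (hnonneg t ht) (mul_nonneg (by positivity) (htail_nonneg t ht))).2 (hkey t ht)
end

section
/- Let H, ρ, φ₁, φ₂ be C¹ solutions on [t₀,∞) of the system: 3H² = ρ + ½φ̇₁² + ½φ̇₂² + V(φ₁,φ₂) (Friedmann constraint), 2Ḣ = −ρ − φ̇₁² − φ̇₂² (Raychaudhuri), ρ̇ + 3Hρ = 0 with ρ ≥ 0, the Klein–Gordon equations φ̈ᵢ + 3Hφ̇ᵢ + ∂V/∂φᵢ = 0, where V(φ₁,φ₂) = 2μ₁⁴sin²(φ₁/(2f₁)) + 2μ₂⁴sin²(φ₂/(2f₂)) + 2μ₃⁴sin²(φ₁/(2f₁) − nφ₂/(2f₂)) with f₁, f₂ ≠ 0, and suppose H(t₀) > 0 and H(t) > 0 for all t ≥ t₀. Then lim_{t→∞} (ρ(t), φ̇₁(t),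 φ̇₂(t)) = (0,0,0) and lim_{t→∞} [3H(t)² − V(φ₁(t),φ₂(t))] = 0. -/
open Set Filter Topology Real

/-- If a function has nonpositive derivative on `[a,b]`, it decreases. -/
private lemma axion_decr_le {f f' : ℝ → ℝ} {a b : ℝ} (hab : a ≤ b)
    (hd : ∀ t ∈ Set.Icc a b, HasDerivAt f (f' t) t)
    (h0 : ∀ t ∈ Set.Icc a b, f' t ≤ 0) : f b ≤ f a := by
  have hanti : AntitoneOn f (Set.Icc a b) :=
    antitoneOn_of_hasDerivWithinAt_nonpos (convex_Icc a b)
      (fun t ht => (hd t ht).continuousAt.continuousWithinAt)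
      (fun t ht => (hd t (interior_subset ht)).hasDerivWithinAt)
      (fun t ht => h0 t (interior_subset ht))
  exact hanti (Set.left_mem_Icc.2 hab) (Set.right_mem_Icc.2 hab) hab

set_option maxHeartbeats 2000000 in
/-- Theorem 1 (local energy estimates) for the axion-like two-scalar-field FLRW cosmology:
along any solution with `H > 0`, the matter density and the scalar field velocities tend to
zero and `3H²` approaches the potential energy `V(φ₁, φ₂)`. -/
theorem axion_local_energy_estimates
    (t₀ μ₁ μ₂ μ₃ f₁ f₂ n : ℝ) (hf₁ : f₁ ≠ 0) (hf₂ : f₂ ≠ 0)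
    (H H' ρ ρ' φ₁ φ₁' φ₁'' φ₂ φ₂' φ₂'' : ℝ → ℝ)
    -- the potential
    (V : ℝ → ℝ → ℝ)
    (hV : ∀ x y, V x y =
      2 * μ₁ ^ 4 * Real.sin (x / (2 * f₁)) ^ 2 +
      2 * μ₂ ^ 4 * Real.sin (y / (2 * f₂)) ^ 2 +
      2 * μ₃ ^ 4 * Real.sin (x / (2 * f₁) - n * y / (2 * f₂)) ^ 2)
    -- differentiability
    (hHd : ∀ t, t₀ ≤ t → HasDerivAt H (H' t) t)
    (hρd : ∀ t, t₀ ≤ t → HasDerivAt ρ (ρ' t) t)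
    (hφ₁d : ∀ t, t₀ ≤ t → HasDerivAt φ₁ (φ₁' t) t)
    (hφ₁d' : ∀ t, t₀ ≤ t → HasDerivAt φ₁' (φ₁'' t) t)
    (hφ₂d : ∀ t, t₀ ≤ t → HasDerivAt φ₂ (φ₂' t) t)
    (hφ₂d' : ∀ t, t₀ ≤ t → HasDerivAt φ₂' (φ₂'' t) t)
    -- Friedmann constraint
    (hfried : ∀ t, t₀ ≤ t →
      3 * (H t) ^ 2 = ρ t + (φ₁' t) ^ 2 / 2 + (φ₂' t) ^ 2 / 2 + V (φ₁ t) (φ₂ t))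
    -- Raychaudhuri equation
    (hray : ∀ t, t₀ ≤ t → 2 * H' t = -(ρ t) - (φ₁' t) ^ 2 - (φ₂' t) ^ 2)
    -- continuity equation and nonnegativity of the dust density
    (hcont : ∀ t, t₀ ≤ t → ρ' t + 3 * H t * ρ t = 0)
    (hρ : ∀ t, t₀ ≤ t → 0 ≤ ρ t)
    -- Klein–Gordon equations
    (hKG₁ : ∀ t, t₀ ≤ t →
      φ₁'' t + 3 * H t * φ₁' t + (μ₁ ^ 4 / f₁) * Real.sin (φ₁ t / f₁)
        + (μ₃ ^ 4 / f₁) * Real.sin (φ₁ t / f₁ - n * φ₂ t / f₂) = 0)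
    (hKG₂ : ∀ t, t₀ ≤ t →
      φ₂'' t + 3 * H t * φ₂' t + (μ₂ ^ 4 / f₂) * Real.sin (φ₂ t / f₂)
        - n * (μ₃ ^ 4 / f₂) * Real.sin (φ₁ t / f₁ - n * φ₂ t / f₂) = 0)
    -- positivity of the expansion
    (hH0 : 0 < H t₀) (hHpos : ∀ t, t₀ ≤ t → 0 < H t) :
    Tendsto ρ atTop (𝓝 0) ∧ Tendsto φ₁' atTop (𝓝 0) ∧ Tendsto φ₂' atTop (𝓝 0) ∧
      Tendsto (fun t => 3 * (H t) ^ 2 - V (φ₁ t) (φ₂ t)) atTop (𝓝 0) := by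
  set H₀ : ℝ := H t₀ with hH₀def
  -- nonnegativity of the potential
  have hVnn : ∀ x y, 0 ≤ V x y := by
    intro x y; rw [hV]; positivity
  -- the total kinetic + matter energy
  set E : ℝ → ℝ := fun t => ρ t + (φ₁' t) ^ 2 + (φ₂' t) ^ 2 with hEdef
  set E' : ℝ → ℝ := fun t => ρ' t + 2 * φ₁' t * φ₁'' t + 2 * φ₂' t * φ₂'' t with hE'def
  have hEnn : ∀ t, t₀ ≤ t → 0 ≤ E t := by
    intro t ht
    have := hρ t ht
    have h1 := sq_nonneg (φ₁' t); have h2 := sq_nonneg (φ₂' t)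
    simp only [hEdef]; linarith
  have hEd : ∀ t, t₀ ≤ t → HasDerivAt E (E' t) t := by
    intro t ht
    have h := ((hρd t ht).add ((hφ₁d' t ht).pow 2)).add ((hφ₂d' t ht).pow 2)
    refine h.congr_deriv ?_
    simp only [hE'def]
    push_cast
    ring
  -- H' is nonpositive
  have hH'np : ∀ t, t₀ ≤ t → H' t ≤ 0 := by
    intro t ht
    have := hray t ht; have := hρ t ht
    have h1 := sq_nonneg (φ₁' t); have h2 := sq_nonneg (φ₂' t)
    linarith
  -- H is decreasing
  have hHanti : ∀ s t, t₀ ≤ s → s ≤ t → H t ≤ H s := by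
    intro s t hs hst
    exact axion_decr_le hst (fun u hu => hHd u (hs.trans hu.1))
      (fun u hu => hH'np u (hs.trans hu.1))
  -- pointwise bounds
  have hHle : ∀ t, t₀ ≤ t → H t ≤ H₀ := fun t ht => hHanti t₀ t le_rfl ht
  have hρle : ∀ t, t₀ ≤ t → ρ t ≤ 3 * H₀ ^ 2 := by
    intro t ht
    have h := hfried t ht
    have hv := hVnn (φ₁ t) (φ₂ t)
    have h1 := sq_nonneg (φ₁' t); have h2 := sq_nonneg (φ₂' t)
    have hsq : H t * H t ≤ H₀ * H₀ :=
      mul_le_mul (hHle t ht) (hHle t ht) (hHpos t ht).le hH0.le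
    nlinarith
  have hφ₁le : ∀ t, t₀ ≤ t → |φ₁' t| ≤ 3 * H₀ := by
    intro t ht
    have h := hfried t ht
    have hv := hVnn (φ₁ t) (φ₂ t)
    have h2 := sq_nonneg (φ₂' t)
    have hsq : H t * H t ≤ H₀ * H₀ :=
      mul_le_mul (hHle t ht) (hHle t ht) (hHpos t ht).le hH0.le
    have hρt := hρ t ht
    have h3 : (φ₁' t) ^ 2 ≤ (3 * H₀) ^ 2 := by nlinarith
    rw [← Real.sqrt_sq (by positivity : (0:ℝ) ≤ 3 * H₀), ← Real.sqrt_sq_eq_abs]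
    exact Real.sqrt_le_sqrt h3
  have hφ₂le : ∀ t, t₀ ≤ t → |φ₂' t| ≤ 3 * H₀ := by
    intro t ht
    have h := hfried t ht
    have hv := hVnn (φ₁ t) (φ₂ t)
    have h2 := sq_nonneg (φ₁' t)
    have hsq : H t * H t ≤ H₀ * H₀ :=
      mul_le_mul (hHle t ht) (hHle t ht) (hHpos t ht).le hH0.le
    have hρt := hρ t ht
    have h3 : (φ₂' t) ^ 2 ≤ (3 * H₀) ^ 2 := by nlinarith
    rw [← Real.sqrt_sq (by positivity : (0:ℝ) ≤ 3 * H₀), ← Real.sqrt_sq_eq_abs]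
    exact Real.sqrt_le_sqrt h3
  -- constants
  set C₁ : ℝ := 9 * H₀ ^ 2 + |μ₁ ^ 4 / f₁| + |μ₃ ^ 4 / f₁| with hC₁def
  set C₂ : ℝ := 9 * H₀ ^ 2 + |μ₂ ^ 4 / f₂| + |n * (μ₃ ^ 4 / f₂)| with hC₂def
  have hC₁nn : 0 ≤ C₁ := by rw [hC₁def]; positivity
  have hC₂nn : 0 ≤ C₂ := by rw [hC₂def]; positivity
  set L : ℝ := 9 * H₀ ^ 3 + 6 * H₀ * C₁ + 6 * H₀ * C₂ + 1 with hLdef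
  have hL1 : (1:ℝ) ≤ L := by
    have h3 : 0 < H₀ ^ 3 := by positivity
    have := mul_nonneg (by positivity : (0:ℝ) ≤ 6 * H₀) hC₁nn
    have := mul_nonneg (by positivity : (0:ℝ) ≤ 6 * H₀) hC₂nn
    rw [hLdef]; nlinarith
  have hLpos : 0 < L := lt_of_lt_of_le one_pos hL1
  -- bound on |φᵢ''|
  have hφ₁'' : ∀ t, t₀ ≤ t → |φ₁'' t| ≤ C₁ := by
    intro t ht
    have heq : φ₁'' t = -(3 * H t * φ₁' t) + -((μ₁ ^ 4 / f₁) * Real.sin (φ₁ t / f₁))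
        + -((μ₃ ^ 4 / f₁) * Real.sin (φ₁ t / f₁ - n * φ₂ t / f₂)) := by
      have := hKG₁ t ht; linarith
    have e1 : |3 * H t * φ₁' t| ≤ 9 * H₀ ^ 2 := by
      rw [abs_mul, abs_of_pos (by have := hHpos t ht; positivity : (0:ℝ) < 3 * H t)]
      nlinarith [mul_le_mul (hHle t ht) (hφ₁le t ht) (abs_nonneg (φ₁' t)) hH0.le,
        hHpos t ht, abs_nonneg (φ₁' t)]
    have e2 : |(μ₁ ^ 4 / f₁) * Real.sin (φ₁ t / f₁)| ≤ |μ₁ ^ 4 / f₁| := by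
      rw [abs_mul]
      exact mul_le_of_le_one_right (abs_nonneg _) (Real.abs_sin_le_one _)
    have e3 : |(μ₃ ^ 4 / f₁) * Real.sin (φ₁ t / f₁ - n * φ₂ t / f₂)| ≤ |μ₃ ^ 4 / f₁| := by
      rw [abs_mul]
      exact mul_le_of_le_one_right (abs_nonneg _) (Real.abs_sin_le_one _)
    calc |φ₁'' t| ≤ |(-(3 * H t * φ₁' t))| + |(-((μ₁ ^ 4 / f₁) * Real.sin (φ₁ t / f₁)))|
          + |(-((μ₃ ^ 4 / f₁) * Real.sin (φ₁ t / f₁ - n * φ₂ t / f₂)))| := by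
          rw [heq]; exact abs_add_three _ _ _
      _ ≤ C₁ := by rw [abs_neg, abs_neg, abs_neg, hC₁def]; linarith
  have hφ₂'' : ∀ t, t₀ ≤ t → |φ₂'' t| ≤ C₂ := by
    intro t ht
    have heq : φ₂'' t = -(3 * H t * φ₂' t) + -((μ₂ ^ 4 / f₂) * Real.sin (φ₂ t / f₂))
        + -(-(n * (μ₃ ^ 4 / f₂)) * Real.sin (φ₁ t / f₁ - n * φ₂ t / f₂)) := by
      have := hKG₂ t ht; ring_nf; ring_nf at this; linarith
    have e1 : |3 * H t * φ₂' t| ≤ 9 * H₀ ^ 2 := by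
      rw [abs_mul, abs_of_pos (by have := hHpos t ht; positivity : (0:ℝ) < 3 * H t)]
      nlinarith [mul_le_mul (hHle t ht) (hφ₂le t ht) (abs_nonneg (φ₂' t)) hH0.le,
        hHpos t ht, abs_nonneg (φ₂' t)]
    have e2 : |(μ₂ ^ 4 / f₂) * Real.sin (φ₂ t / f₂)| ≤ |μ₂ ^ 4 / f₂| := by
      rw [abs_mul]
      exact mul_le_of_le_one_right (abs_nonneg _) (Real.abs_sin_le_one _)
    have e3 : |(-(n * (μ₃ ^ 4 / f₂))) * Real.sin (φ₁ t / f₁ - n * φ₂ t / f₂)|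
        ≤ |n * (μ₃ ^ 4 / f₂)| := by
      rw [abs_mul, abs_neg]
      exact mul_le_of_le_one_right (abs_nonneg _) (Real.abs_sin_le_one _)
    calc |φ₂'' t| ≤ |(-(3 * H t * φ₂' t))| + |(-((μ₂ ^ 4 / f₂) * Real.sin (φ₂ t / f₂)))|
          + |(-(-(n * (μ₃ ^ 4 / f₂)) * Real.sin (φ₁ t / f₁ - n * φ₂ t / f₂)))| := by
          rw [heq]; exact abs_add_three _ _ _
      _ ≤ C₂ := by rw [abs_neg, abs_neg, abs_neg, hC₂def]; linarith
  -- bound on |E'|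
  have hE'bd : ∀ t, t₀ ≤ t → |E' t| ≤ L := by
    intro t ht
    have e0 : |ρ' t| ≤ 9 * H₀ ^ 3 := by
      have heq : ρ' t = -(3 * H t * ρ t) := by have := hcont t ht; linarith
      rw [heq, abs_neg, abs_of_nonneg
        (by have := hHpos t ht; have := hρ t ht; positivity)]
      nlinarith [mul_le_mul (hHle t ht) (hρle t ht) (hρ t ht) hH0.le]
    have e1 : |2 * φ₁' t * φ₁'' t| ≤ 6 * H₀ * C₁ := by
      rw [abs_mul, abs_mul, abs_two]
      nlinarith [mul_le_mul (hφ₁le t ht) (hφ₁'' t ht) (abs_nonneg (φ₁'' t))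
        (by positivity : (0:ℝ) ≤ 3 * H₀), abs_nonneg (φ₁' t), abs_nonneg (φ₁'' t)]
    have e2 : |2 * φ₂' t * φ₂'' t| ≤ 6 * H₀ * C₂ := by
      rw [abs_mul, abs_mul, abs_two]
      nlinarith [mul_le_mul (hφ₂le t ht) (hφ₂'' t ht) (abs_nonneg (φ₂'' t))
        (by positivity : (0:ℝ) ≤ 3 * H₀), abs_nonneg (φ₂' t), abs_nonneg (φ₂'' t)]
    calc |E' t| ≤ |ρ' t| + |2 * φ₁' t * φ₁'' t| + |2 * φ₂' t * φ₂'' t| := abs_add_three _ _ _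
      _ ≤ L := by rw [hLdef]; linarith
  -- E is Lipschitz with constant L on [t₀, ∞)
  have hLip : ∀ a b, t₀ ≤ a → a ≤ b → |E b - E a| ≤ L * (b - a) := by
    intro a b ha hab
    have key := (convex_Icc a b).norm_image_sub_le_of_norm_hasDerivWithin_le
      (f := E) (f' := E')
      (fun x hx => (hEd x (ha.trans hx.1)).hasDerivWithinAt)
      (fun x hx => by rw [Real.norm_eq_abs]; exact hE'bd x (ha.trans hx.1))
      (Set.left_mem_Icc.2 hab) (Set.right_mem_Icc.2 hab)
    rwa [Real.norm_eq_abs, Real.norm_eq_abs, abs_of_nonneg (sub_nonneg.2 hab)] at key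
  have hEeq : ∀ u, E u = ρ u + (φ₁' u) ^ 2 + (φ₂' u) ^ 2 := fun u => rfl
  clear_value H₀ C₁ C₂ L E E'
  -- H drops by a fixed amount past any point where E is at least ε
  have hdrop : ∀ t ε, t₀ ≤ t → 0 < ε → ε ≤ E t →
      H (t + ε / (2 * L)) ≤ H t - ε ^ 2 / (8 * L) := by
    intro t ε ht hε hEt
    set δ : ℝ := ε / (2 * L) with hδdef
    have hδpos : 0 < δ := by rw [hδdef]; positivity
    have hLδ : L * δ = ε / 2 := by
      rw [hδdef]; field_simp
    have heps : ε / 4 * δ = ε ^ 2 / (8 * L) := by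
      rw [hδdef]; field_simp; ring
    clear_value δ
    have hElow : ∀ u ∈ Set.Icc t (t + δ), ε / 2 ≤ E u := by
      intro u hu
      have h1 := hLip t u ht hu.1
      have h2 : L * (u - t) ≤ L * δ := by
        apply mul_le_mul_of_nonneg_left _ hLpos.le
        linarith [hu.2]
      have h3 := abs_le.1 h1
      have h4 : L * (u - t) ≤ ε / 2 := by rw [← hLδ]; exact h2
      linarith [h3.1, h4, hEt]
    have hg : H (t + δ) + ε / 4 * (t + δ) ≤ H t + ε / 4 * t := by
      apply axion_decr_le (f := fun u => H u + ε / 4 * u)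
        (f' := fun u => H' u + ε / 4) (by linarith)
      · intro u hu
        exact (hHd u (ht.trans hu.1)).add
          (by simpa using (hasDerivAt_id u).const_mul (ε / 4))
      · intro u hu
        have hre := hray u (ht.trans hu.1)
        have hEu : ε / 2 ≤ E u := hElow u hu
        have hEe := hEeq u
        linarith
    nlinarith [hg, heps]
  -- E tends to zero (Barbalat-type argument)
  have hE0 : Tendsto E atTop (𝓝 0) := by
    by_contra hc
    rw [Metric.tendsto_atTop] at hc
    push_neg at hc
    obtain ⟨ε, hε, hfreq⟩ := hc
    set δ : ℝ := ε / (2 * L) with hδdef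
    have hδpos : 0 < δ := by rw [hδdef]; positivity
    set d : ℝ := ε ^ 2 / (8 * L) with hddef
    have hdpos : 0 < d := by rw [hddef]; positivity
    have hex : ∀ N : ℝ, ∃ u, max N t₀ ≤ u ∧ ε ≤ E u := by
      intro N
      obtain ⟨u, hu1, hu2⟩ := hfreq (max N t₀)
      refine ⟨u, hu1, ?_⟩
      have htu : t₀ ≤ u := le_trans (le_max_right _ _) hu1
      rwa [Real.dist_eq, sub_zero, abs_of_nonneg (hEnn u htu)] at hu2
    set seq : ℕ → ℝ := fun k =>
      Nat.rec (hex t₀).choose (fun _ p => (hex (p + δ)).choose) k with hseqdef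
    have hseq : ∀ k, t₀ ≤ seq k ∧ ε ≤ E (seq k) := by
      intro k
      induction k with
      | zero =>
        obtain ⟨h1, h2⟩ := (hex t₀).choose_spec
        exact ⟨(le_max_right t₀ t₀).trans h1, h2⟩
      | succ k ih =>
        obtain ⟨h1, h2⟩ := (hex (seq k + δ)).choose_spec
        exact ⟨(le_max_right _ _).trans h1, h2⟩
    have hstep : ∀ k, seq k + δ ≤ seq (k + 1) := by
      intro k
      exact (le_max_left _ _).trans (hex (seq k + δ)).choose_spec.1
    have hdec : ∀ k : ℕ, H (seq k) ≤ H t₀ - k * d := by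
      intro k
      induction k with
      | zero =>
        simpa using hHanti t₀ (seq 0) le_rfl (hseq 0).1
      | succ k ih =>
        have h1 : H (seq (k + 1)) ≤ H (seq k + δ) :=
          hHanti (seq k + δ) (seq (k + 1)) (by linarith [(hseq k).1]) (hstep k)
        have h2 : H (seq k + δ) ≤ H (seq k) - d := by
          have := hdrop (seq k) ε (hseq k).1 hε (hseq k).2
          rw [hδdef, hddef]; exact this
        push_cast
        linarith
    obtain ⟨k, hk⟩ := exists_nat_gt (H t₀ / d)
    have hk' : H t₀ < k * d := by
      rw [div_lt_iff₀ hdpos] at hk; linarith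
    have := hHpos (seq k) (hseq k).1
    linarith [hdec k]
  -- extract component limits by squeezing
  have hρ0 : Tendsto ρ atTop (𝓝 0) := by
    apply tendsto_of_tendsto_of_tendsto_of_le_of_le' tendsto_const_nhds hE0
    · filter_upwards [eventually_ge_atTop t₀] with t ht using hρ t ht
    · filter_upwards [eventually_ge_atTop t₀] with t ht
      have h1 := sq_nonneg (φ₁' t); have h2 := sq_nonneg (φ₂' t)
      have := hEeq t
      linarith
  have hsq1 : Tendsto (fun t => (φ₁' t) ^ 2) atTop (𝓝 0) := by
    apply tendsto_of_tendsto_of_tendsto_of_le_of_le' tendsto_const_nhds hE0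
    · filter_upwards with t using sq_nonneg _
    · filter_upwards [eventually_ge_atTop t₀] with t ht
      have h1 := hρ t ht; have h2 := sq_nonneg (φ₂' t)
      have := hEeq t
      linarith
  have hsq2 : Tendsto (fun t => (φ₂' t) ^ 2) atTop (𝓝 0) := by
    apply tendsto_of_tendsto_of_tendsto_of_le_of_le' tendsto_const_nhds hE0
    · filter_upwards with t using sq_nonneg _
    · filter_upwards [eventually_ge_atTop t₀] with t ht
      have h1 := hρ t ht; have h2 := sq_nonneg (φ₁' t)
      have := hEeq t
      linarith
  have habs1 : Tendsto (fun t => |φ₁' t|) atTop (𝓝 0) := by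
    have h := (Real.continuous_sqrt.tendsto 0).comp hsq1
    simpa [Function.comp_def, Real.sqrt_sq_eq_abs] using h
  have hφ₁0 : Tendsto φ₁' atTop (𝓝 0) := by
    apply tendsto_of_tendsto_of_tendsto_of_le_of_le' (by simpa using habs1.neg) habs1
    · filter_upwards with t using neg_abs_le _
    · filter_upwards with t using le_abs_self _
  have habs2 : Tendsto (fun t => |φ₂' t|) atTop (𝓝 0) := by
    have h := (Real.continuous_sqrt.tendsto 0).comp hsq2
    simpa [Function.comp_def, Real.sqrt_sq_eq_abs] using h
  have hφ₂0 : Tendsto φ₂' atTop (𝓝 0) := by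
    apply tendsto_of_tendsto_of_tendsto_of_le_of_le' (by simpa using habs2.neg) habs2
    · filter_upwards with t using neg_abs_le _
    · filter_upwards with t using le_abs_self _
  refine ⟨hρ0, hφ₁0, hφ₂0, ?_⟩
  have heq : (fun t => ρ t + (φ₁' t) ^ 2 / 2 + (φ₂' t) ^ 2 / 2)
      =ᶠ[atTop] (fun t => 3 * (H t) ^ 2 - V (φ₁ t) (φ₂ t)) := by
    filter_upwards [eventually_ge_atTop t₀] with t ht
    have := hfried t ht; linarith
  have hsum : Tendsto (fun t => ρ t + (φ₁' t) ^ 2 / 2 + (φ₂' t) ^ 2 / 2) atTop (𝓝 0) := by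
    have := (hρ0.add (hsq1.div_const 2)).add (hsq2.div_const 2)
    simpa using this
  exact Tendsto.congr' heq hsum
end

section
/- Suppose Ω̄_t(0) ∈ (0,1), Ω̄₁(0), Ω̄₂(0) ≥ 0 with Ω̄₁(0)+Ω̄₂(0) ≤ Ω̄_t(0), and H₀ > 0. Then the functions Ω̄_t(τ) = Ω̄_t(0)/(Ω̄_t(0)+e^{3τ}(1−Ω̄_t(0))), H(τ) = H₀e^{−3τ/2}√(Ω̄_t(0)+e^{3τ}(1−Ω̄_t(0))), Ω̄ᵢ(τ) = Ω̄ᵢ(0)/(Ω̄_t(0)+e^{3τ}(1−Ω̄_t(0))) (i = 1,2), Ω̄(τ) = (Ω̄_t(0)−Ω̄₁(0)−Ω̄₂(0))/(Ω̄_t(0)+e^{3τ}(1−Ω̄_t(0))) solve the system dΩ̄₁/dτ = −3Ω̄₁(1−Ω̄_t), dΩ̄₂/dτ = −3Ω̄₂(1−Ω̄_t), dΩ̄/dτ = −3Ω̄(1−Ω̄_t), dH/dτ = −(3/2)HΩ̄_t, where Ω̄_t = Ω̄₁+Ω̄₂+Ω̄, and lim_{τ→∞}(H, Ω̄_t, Ω̄,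 Ω̄₁, Ω̄₂) = (H₀√(1−Ω̄_t(0)), 0, 0, 0, 0). -/
open Set Filter Topology Real

/-- The explicit functions solve the time-averaged axion-cosmology system and converge to a
de Sitter state with Hubble value `H₀√(1 - Ω̄_t(0))`. -/
theorem averaged_system_explicit_solution
    (A₁ A₂ At H₀ : ℝ)
    (hAt : At ∈ Ioo (0 : ℝ) 1) (hA₁ : 0 ≤ A₁) (hA₂ : 0 ≤ A₂)
    (hsum : A₁ + A₂ ≤ At) (hH₀ : 0 < H₀)
    (D Ωt H Ω₁ Ω₂ Ωm : ℝ → ℝ)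
    (hD : ∀ τ, D τ = At + Real.exp (3 * τ) * (1 - At))
    (hΩt : ∀ τ, Ωt τ = At / D τ)
    (hH : ∀ τ, H τ = H₀ * Real.exp (-(3 * τ) / 2) * Real.sqrt (D τ))
    (hΩ₁ : ∀ τ, Ω₁ τ = A₁ / D τ)
    (hΩ₂ : ∀ τ, Ω₂ τ = A₂ / D τ)
    (hΩm : ∀ τ, Ωm τ = (At - A₁ - A₂) / D τ) :
    (∀ τ : ℝ,
      HasDerivAt Ω₁ (-3 * Ω₁ τ * (1 - (Ω₁ τ + Ω₂ τ + Ωm τ))) τ ∧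
      HasDerivAt Ω₂ (-3 * Ω₂ τ * (1 - (Ω₁ τ + Ω₂ τ + Ωm τ))) τ ∧
      HasDerivAt Ωm (-3 * Ωm τ * (1 - (Ω₁ τ + Ω₂ τ + Ωm τ))) τ ∧
      HasDerivAt H (-(3 / 2) * H τ * (Ω₁ τ + Ω₂ τ + Ωm τ)) τ ∧
      Ωt τ = Ω₁ τ + Ω₂ τ + Ωm τ) ∧
    Tendsto H atTop (𝓝 (H₀ * Real.sqrt (1 - At))) ∧
    Tendsto Ωt atTop (𝓝 0) ∧ Tendsto Ωm atTop (𝓝 0) ∧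
    Tendsto Ω₁ atTop (𝓝 0) ∧ Tendsto Ω₂ atTop (𝓝 0) := by
  obtain ⟨hAt0, hAt1⟩ := hAt
  have h1At : (0:ℝ) < 1 - At := by linarith
  have hDpos : ∀ τ, 0 < D τ := by
    intro τ
    rw [hD τ]
    have := Real.exp_pos (3 * τ)
    nlinarith
  have hDne : ∀ τ, D τ ≠ 0 := fun τ => (hDpos τ).ne'
  have h3 : Tendsto (fun τ : ℝ => 3 * τ) atTop atTop :=
    tendsto_id.const_mul_atTop (by norm_num)
  have hDderiv : ∀ τ, HasDerivAt D (3 * (D τ - At)) τ := by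
    intro τ
    have he : HasDerivAt (fun τ : ℝ => Real.exp (3 * τ)) (Real.exp (3 * τ) * 3) τ := by
      simpa [Function.comp_def] using (Real.hasDerivAt_exp (3 * τ)).comp τ ((hasDerivAt_id τ).const_mul 3)
    have h : HasDerivAt (fun τ => At + Real.exp (3 * τ) * (1 - At))
        (Real.exp (3 * τ) * 3 * (1 - At)) τ := by
      simpa using (he.mul_const (1 - At)).const_add At
    have h' : HasDerivAt D (Real.exp (3 * τ) * 3 * (1 - At)) τ :=
      h.congr_of_eventuallyEq (by filter_upwards with x using (hD x))
    convert h' using 1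
    rw [hD τ]; ring
  have hsumeq : ∀ τ, Ω₁ τ + Ω₂ τ + Ωm τ = At / D τ := by
    intro τ
    rw [hΩ₁, hΩ₂, hΩm]
    field_simp
    ring
  have hdiv : ∀ (c : ℝ) (τ : ℝ),
      HasDerivAt (fun x => c / D x) (-3 * (c / D τ) * (1 - At / D τ)) τ := by
    intro c τ
    have h := (hasDerivAt_const τ c).div (hDderiv τ) (hDne τ)
    refine h.congr_deriv ?_
    have := hDne τ
    field_simp
    ring
  -- limits of c / D
  have hDtop : Tendsto D atTop atTop := by
    have he : Tendsto (fun τ : ℝ => Real.exp (3 * τ)) atTop atTop :=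
      Real.tendsto_exp_atTop.comp h3
    have := tendsto_atTop_add_const_left atTop At (he.atTop_mul_const h1At)
    exact this.congr' (by filter_upwards with x using (hD x).symm)
  have hlim : ∀ c : ℝ, Tendsto (fun τ => c / D τ) atTop (𝓝 0) :=
    fun c => Tendsto.div_atTop tendsto_const_nhds hDtop
  refine ⟨?_, ?_, ?_, ?_, ?_, ?_⟩
  · intro τ
    have hΩteq : Ω₁ τ + Ω₂ τ + Ωm τ = At / D τ := hsumeq τ
    refine ⟨?_, ?_, ?_, ?_, ?_⟩
    · rw [hΩteq, hΩ₁]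
      exact (hdiv A₁ τ).congr_of_eventuallyEq (by filter_upwards with x using (hΩ₁ x))
    · rw [hΩteq, hΩ₂]
      exact (hdiv A₂ τ).congr_of_eventuallyEq (by filter_upwards with x using (hΩ₂ x))
    · rw [hΩteq, hΩm]
      exact (hdiv (At - A₁ - A₂) τ).congr_of_eventuallyEq
        (by filter_upwards with x using (hΩm x))
    · have hsq : HasDerivAt (fun x => Real.sqrt (D x))
          (3 * (D τ - At) / (2 * Real.sqrt (D τ))) τ :=
        (hDderiv τ).sqrt (hDne τ)
      have hexp : HasDerivAt (fun x : ℝ => H₀ * Real.exp (-(3 * x) / 2))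
          (H₀ * (Real.exp (-(3 * τ) / 2) * (-(3 : ℝ) / 2))) τ := by
        have hlin : HasDerivAt (fun x : ℝ => -(3 * x) / 2) (-(3 : ℝ) / 2) τ := by
          simpa using (((hasDerivAt_id τ).const_mul (3:ℝ)).neg.div_const 2)
        have he : HasDerivAt (fun x : ℝ => Real.exp (-(3 * x) / 2))
            (Real.exp (-(3 * τ) / 2) * (-(3 : ℝ) / 2)) τ := by
          simpa [Function.comp_def] using (Real.hasDerivAt_exp (-(3 * τ) / 2)).comp τ hlin
        exact he.const_mul H₀
      have hHd : HasDerivAt H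
          (H₀ * (Real.exp (-(3 * τ) / 2) * (-(3:ℝ) / 2)) * Real.sqrt (D τ) +
            H₀ * Real.exp (-(3 * τ) / 2) * (3 * (D τ - At) / (2 * Real.sqrt (D τ)))) τ :=
        (hexp.mul hsq).congr_of_eventuallyEq (by filter_upwards with x using (hH x))
      rw [hΩteq, hH]
      convert hHd using 1
      have hsqpos : 0 < Real.sqrt (D τ) := Real.sqrt_pos.2 (hDpos τ)
      have hsqsq : Real.sqrt (D τ) * Real.sqrt (D τ) = D τ :=
        Real.mul_self_sqrt (hDpos τ).le
      have hDneτ := hDne τ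
      set s := Real.sqrt (D τ) with hs
      have hDs : D τ = s * s := hsqsq.symm
      rw [hDs]
      have hsne : s ≠ 0 := hsqpos.ne'
      field_simp
      ring
    · rw [hΩt, hΩteq]
  · -- H limit
    have heneg : Tendsto (fun τ : ℝ => Real.exp (-(3 * τ))) atTop (𝓝 0) :=
      Real.tendsto_exp_neg_atTop_nhds_zero.comp h3
    have key : Tendsto (fun τ => At * Real.exp (-(3 * τ)) + (1 - At)) atTop
        (𝓝 (1 - At)) := by
      have := (heneg.const_mul At).add_const (1 - At)
      simpa using this
    have hcont : Tendsto (fun τ => H₀ * Real.sqrt (At * Real.exp (-(3 * τ)) + (1 - At)))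
        atTop (𝓝 (H₀ * Real.sqrt (1 - At))) :=
      ((Real.continuous_sqrt.tendsto _).comp key).const_mul H₀
    refine hcont.congr fun τ => ?_
    rw [hH]
    have h1 : At * Real.exp (-(3 * τ)) + (1 - At) = Real.exp (-(3 * τ)) * D τ := by
      rw [hD]
      have hee : Real.exp (-(3 * τ)) * Real.exp (3 * τ) = 1 := by
        rw [← Real.exp_add]; simp
      linear_combination (At - 1) * hee
    rw [h1, Real.sqrt_mul (Real.exp_nonneg _), ← Real.exp_half]
    ring
  · exact (hlim At).congr fun τ => (hΩt τ).symm
  · exact (hlim (At - A₁ - A₂)).congr fun τ => (hΩm τ).symm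
  · exact (hlim A₁).congr fun τ => (hΩ₁ τ).symm
  · exact (hlim A₂).congr fun τ => (hΩ₂ τ).symm
end
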